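/- Let G = C_{n_1} × ... × C_{n_k} with 1 < n_1 | ... | n_k and k ≥ 2, n_{k-1} = n_k = n. Write the last two factors as A = ⟨a⟩ and B = ⟨b⟩, both of order n, and let P = G_1 ⋯ G_{k−2} be the product of the first k−2 factors. For each element x of order n in AB, set H_x = P⟨x⟩. Then the union of the H_x over all such x equals G. -/
import Mathlib


/-- The abelian group with invariant factors `n 0 ∣ n 1 ∣ ... ∣ n (k-1)`. -/
abbrev IG (k : ℕ) (n : Fin k → ℕ) := ∀ i : Fin k, Multiplicative (ZMod (n i))

/-- The canonical generator of the `i`-th cyclic factor. -/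
abbrev gen (k : ℕ) (n : Fin k → ℕ) (i : Fin k) : IG k n :=
  Pi.mulSingle i (Multiplicative.ofAdd (1 : ZMod (n i)))

/-- If `gcd(gcd(a,b), m) = 1` and `m > 0`, there is `α` with `gcd(a + α·b, m) = 1`. -/
lemma aux_exists_add_mul_coprime (a b m : ℕ) (hm : 0 < m)
    (h : Nat.gcd (Nat.gcd a b) m = 1) : ∃ α : ℕ, Nat.gcd (a + α * b) m = 1 := by
  refine ⟨(m.primeFactors.filter (fun p => ¬ p ∣ a)).prod id, ?_⟩
  set α := (m.primeFactors.filter (fun p => ¬ p ∣ a)).prod id with hα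
  by_contra hg
  have hp : (Nat.gcd (a + α * b) m).minFac.Prime := Nat.minFac_prime hg
  set p := (Nat.gcd (a + α * b) m).minFac with hpdef
  have hpd : p ∣ a + α * b := (Nat.minFac_dvd _).trans (Nat.gcd_dvd_left _ _)
  have hpm : p ∣ m := (Nat.minFac_dvd _).trans (Nat.gcd_dvd_right _ _)
  by_cases hpa : p ∣ a
  · have hpab : p ∣ α * b := (Nat.dvd_add_right hpa).mp hpd
    rcases (Nat.Prime.dvd_mul hp).mp hpab with hpα | hpb
    · obtain ⟨q, hq, hpq⟩ := hp.prime.exists_mem_finset_dvd hpα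
      simp only [Finset.mem_filter, Nat.mem_primeFactors] at hq
      have : p = q := (Nat.prime_dvd_prime_iff_eq hp hq.1.1).mp hpq
      exact hq.2 (this ▸ hpa)
    · have : p ∣ Nat.gcd (Nat.gcd a b) m := Nat.dvd_gcd (Nat.dvd_gcd hpa hpb) hpm
      rw [h] at this
      exact hp.ne_one (Nat.dvd_one.mp this)
  · have hpα : p ∣ α := by
      apply Finset.dvd_prod_of_mem
      simp only [Finset.mem_filter, Nat.mem_primeFactors]
      exact ⟨⟨hp, hpm, hm.ne'⟩, hpa⟩
    exact hpa ((Nat.dvd_add_right (hpα.mul_right b)).mp (by rwa [add_comm] at hpd))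

/-- Every pair `(u,v)` mod `m` is a multiple `c • (s,t)` of a pair with `gcd(s,t,m)=1`. -/
lemma aux_exists_order_generator (m : ℕ) (hm : 0 < m) (u v : ℕ) :
    ∃ s t c : ℕ, Nat.gcd (Nat.gcd s t) m = 1 ∧
      c * s ≡ u [MOD m] ∧ c * t ≡ v [MOD m] := by
  set d := Nat.gcd (Nat.gcd u v) m with hd
  have hdpos : 0 < d := Nat.gcd_pos_of_pos_right _ hm
  have hdu : d ∣ u := (Nat.gcd_dvd_left _ _).trans (Nat.gcd_dvd_left _ _)
  have hdv : d ∣ v := (Nat.gcd_dvd_left _ _).trans (Nat.gcd_dvd_right _ _)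
  have hdm : d ∣ m := Nat.gcd_dvd_right _ _
  set s₀ := u / d with hs₀
  set t₀ := v / d with ht₀
  set m' := m / d with hm'
  have h₁ : Nat.gcd (Nat.gcd s₀ t₀) m' = 1 := by
    rw [hs₀, ht₀, hm', Nat.gcd_div hdu hdv, Nat.gcd_div (Nat.gcd_dvd_left _ _) hdm]
    exact Nat.div_self hdpos
  set g₀ := Nat.gcd s₀ m with hg₀
  have hg₀pos : 0 < g₀ := Nat.gcd_pos_of_pos_right _ hm
  have h₂ : Nat.gcd (Nat.gcd t₀ m') g₀ = 1 := by
    by_contra hg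
    have hp : (Nat.gcd (Nat.gcd t₀ m') g₀).minFac.Prime := Nat.minFac_prime hg
    set p := (Nat.gcd (Nat.gcd t₀ m') g₀).minFac with hpdef
    have hpt : p ∣ t₀ := ((Nat.minFac_dvd _).trans (Nat.gcd_dvd_left _ _)).trans (Nat.gcd_dvd_left _ _)
    have hpm' : p ∣ m' := ((Nat.minFac_dvd _).trans (Nat.gcd_dvd_left _ _)).trans (Nat.gcd_dvd_right _ _)
    have hps : p ∣ s₀ := ((Nat.minFac_dvd _).trans (Nat.gcd_dvd_right _ _)).trans (Nat.gcd_dvd_left _ _)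
    have : p ∣ Nat.gcd (Nat.gcd s₀ t₀) m' := Nat.dvd_gcd (Nat.dvd_gcd hps hpt) hpm'
    rw [h₁] at this
    exact hp.ne_one (Nat.dvd_one.mp this)
  obtain ⟨α, hα⟩ := aux_exists_add_mul_coprime t₀ m' g₀ hg₀pos h₂
  refine ⟨s₀, t₀ + α * m', d, ?_, ?_, ?_⟩
  · by_contra hg
    have hp : (Nat.gcd (Nat.gcd s₀ (t₀ + α * m')) m).minFac.Prime := Nat.minFac_prime hg
    set p := (Nat.gcd (Nat.gcd s₀ (t₀ + α * m')) m).minFac with hpdef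
    have hps : p ∣ s₀ := ((Nat.minFac_dvd _).trans (Nat.gcd_dvd_left _ _)).trans (Nat.gcd_dvd_left _ _)
    have hpt : p ∣ t₀ + α * m' := ((Nat.minFac_dvd _).trans (Nat.gcd_dvd_left _ _)).trans (Nat.gcd_dvd_right _ _)
    have hpm : p ∣ m := (Nat.minFac_dvd _).trans (Nat.gcd_dvd_right _ _)
    have : p ∣ Nat.gcd (t₀ + α * m') g₀ := Nat.dvd_gcd hpt (Nat.dvd_gcd hps hpm)
    rw [hα] at this
    exact hp.ne_one (Nat.dvd_one.mp this)
  · rw [Nat.mul_div_cancel' hdu]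
  · have key : d * (t₀ + α * m') = v + α * m := by
      rw [Nat.mul_add, Nat.mul_div_cancel' hdv, ← Nat.mul_assoc, Nat.mul_comm d α,
        Nat.mul_assoc, Nat.mul_div_cancel' hdm]
    rw [key]
    simp [Nat.ModEq, Nat.add_mul_mod_self_right]

lemma main_aux (k : ℕ) (n : Fin k → ℕ) [∀ i, NeZero (n i)] (nn : ℕ) (i₁ i₂ : Fin k)
    (hne : i₁ ≠ i₂) (heq1 : n i₁ = nn) (heq2 : n i₂ = nn) (hnn : 0 < nn)
    (S : Set (Fin k)) (hS : ∀ j, j ∉ S → j = i₁ ∨ j = i₂) (g : IG k n) :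
    ∃ x : IG k n, (x ∈ Subgroup.closure {gen k n i₁, gen k n i₂} ∧ orderOf x = nn) ∧
      g ∈ (Subgroup.closure (gen k n '' S) ⊔ Subgroup.zpowers x : Subgroup (IG k n)) := by
  obtain ⟨s, t, c, hco, hs, ht⟩ := aux_exists_order_generator nn hnn
      (Multiplicative.toAdd (g i₁)).val (Multiplicative.toAdd (g i₂)).val
  set x : IG k n := Pi.mulSingle i₁ (Multiplicative.ofAdd ((s : ZMod (n i₁)))) *
      Pi.mulSingle i₂ (Multiplicative.ofAdd ((t : ZMod (n i₂)))) with hxdef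
  have hgen : ∀ (i : Fin k) (m : ℕ), gen k n i ^ m
      = Pi.mulSingle i (Multiplicative.ofAdd ((m : ZMod (n i)))) := by
    intro i m
    rw [gen, ← Pi.mulSingle_pow]
    congr 1
    rw [← ofAdd_nsmul]
    congr 1
    simp [nsmul_eq_mul]
  have hx1 : x i₁ = Multiplicative.ofAdd ((s : ZMod (n i₁))) := by
    simp [hxdef, Pi.mulSingle_eq_same, Pi.mulSingle_eq_of_ne hne]
  have hx2 : x i₂ = Multiplicative.ofAdd ((t : ZMod (n i₂))) := by
    simp [hxdef, Pi.mulSingle_eq_same, Pi.mulSingle_eq_of_ne hne.symm]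
  have hxj : ∀ j, j ≠ i₁ → j ≠ i₂ → x j = 1 := by
    intro j hj1 hj2
    simp [hxdef, Pi.mulSingle_eq_of_ne hj1, Pi.mulSingle_eq_of_ne hj2]
  have hxmem : x ∈ Subgroup.closure {gen k n i₁, gen k n i₂} := by
    rw [hxdef, ← hgen i₁ s, ← hgen i₂ t]
    exact mul_mem (pow_mem (Subgroup.subset_closure (by simp)) s)
      (pow_mem (Subgroup.subset_closure (by simp)) t)
  have hpow2 : ∀ (i : Fin k) (a r : ℕ),
      (Multiplicative.ofAdd ((a : ZMod (n i)))) ^ r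
        = Multiplicative.ofAdd (((r * a : ℕ) : ZMod (n i))) := by
    intro i a r
    rw [← ofAdd_nsmul]
    congr 1
    push_cast [nsmul_eq_mul]
    ring
  have hcoord : ∀ (i : Fin k) (a r : ℕ),
      ((Multiplicative.ofAdd ((a : ZMod (n i)))) ^ r = 1 ↔ n i ∣ r * a) := by
    intro i a r
    rw [hpow2, ← ZMod.natCast_eq_zero_iff]
    exact ⟨fun h => by simpa using congrArg Multiplicative.toAdd h,
      fun h => by rw [h]; rfl⟩
  have hxpow : ∀ r : ℕ, (x ^ r = 1 ↔ (nn ∣ r * s ∧ nn ∣ r * t)) := by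
    intro r
    constructor
    · intro h
      refine ⟨heq1 ▸ (hcoord i₁ s r).mp ?_, heq2 ▸ (hcoord i₂ t r).mp ?_⟩
      · rw [← hx1]; exact congrFun h i₁
      · rw [← hx2]; exact congrFun h i₂
    · rintro ⟨hd1, hd2⟩
      funext j
      show (x j) ^ r = 1
      by_cases hj1 : j = i₁
      · subst hj1
        rw [hx1]
        exact (hcoord j s r).mpr (heq1.symm ▸ hd1)
      · by_cases hj2 : j = i₂
        · subst hj2
          rw [hx2]
          exact (hcoord j t r).mpr (heq2.symm ▸ hd2)
        · rw [hxj j hj1 hj2, one_pow]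
  have hordx : orderOf x = nn := by
    have hx_nn : x ^ nn = 1 := (hxpow nn).mpr ⟨dvd_mul_right nn s, dvd_mul_right nn t⟩
    have hdvd1 : orderOf x ∣ nn := orderOf_dvd_of_pow_eq_one hx_nn
    have hdvd2 : nn ∣ orderOf x := by
      obtain ⟨hs', ht'⟩ := (hxpow (orderOf x)).mp (pow_orderOf_eq_one x)
      have : nn ∣ orderOf x * Nat.gcd s t := by
        rw [← Nat.gcd_mul_left]
        exact Nat.dvd_gcd hs' ht'
      exact (Nat.Coprime.symm hco).dvd_of_dvd_mul_right this
    exact Nat.dvd_antisymm hdvd1 hdvd2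
  refine ⟨x, ⟨hxmem, hordx⟩, ?_⟩
  have hgx : g = (g * (x ^ c)⁻¹) * x ^ c := by rw [inv_mul_cancel_right]
  rw [hgx]
  refine Subgroup.mul_mem _ ?_
    (Subgroup.mem_sup_right (Subgroup.mem_zpowers_iff.mpr ⟨(c : ℤ), by rw [zpow_natCast]⟩))
  have hcs : ((c * s : ℕ) : ZMod (n i₁)) = Multiplicative.toAdd (g i₁) := by
    have h' := hs
    rw [← heq1] at h'
    rw [(ZMod.natCast_eq_natCast_iff _ _ _).mpr h', ZMod.natCast_val, ZMod.cast_id]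
  have hct : ((c * t : ℕ) : ZMod (n i₂)) = Multiplicative.toAdd (g i₂) := by
    have h' := ht
    rw [← heq2] at h'
    rw [(ZMod.natCast_eq_natCast_iff _ _ _).mpr h', ZMod.natCast_val, ZMod.cast_id]
  have hpi₁ : (g * (x ^ c)⁻¹) i₁ = 1 := by
    have hxc : (x ^ c) i₁ = g i₁ := by
      rw [Pi.pow_apply, hx1, hpow2, hcs, ofAdd_toAdd]
    simp [Pi.mul_apply, Pi.inv_apply, hxc]
  have hpi₂ : (g * (x ^ c)⁻¹) i₂ = 1 := by
    have hxc : (x ^ c) i₂ = g i₂ := by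
      rw [Pi.pow_apply, hx2, hpow2, hct, ofAdd_toAdd]
    simp [Pi.mul_apply, Pi.inv_apply, hxc]
  rw [← Finset.univ_prod_mulSingle (g * (x ^ c)⁻¹)]
  apply Subgroup.prod_mem
  intro j _
  by_cases hj : j ∈ S
  · apply Subgroup.mem_sup_left
    have heq : Pi.mulSingle j ((g * (x ^ c)⁻¹) j)
        = gen k n j ^ (Multiplicative.toAdd ((g * (x ^ c)⁻¹) j)).val := by
      rw [hgen]
      congr 1
      rw [ZMod.natCast_val, ZMod.cast_id, ofAdd_toAdd]
    rw [heq]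
    exact pow_mem (Subgroup.subset_closure (Set.mem_image_of_mem _ hj)) _
  · rcases hS j hj with rfl | rfl
    · rw [hpi₁, Pi.mulSingle_one]; exact one_mem _
    · rw [hpi₂, Pi.mulSingle_one]; exact one_mem _

set_option maxHeartbeats 2000000 in
theorem stmt_15 (k : ℕ) (hk : 2 ≤ k) (n : Fin k → ℕ) (nn : ℕ)
    (h1 : ∀ i, 1 < n i) (hdvd : ∀ i j : Fin k, i ≤ j → n i ∣ n j)
    (heq1 : n ⟨k - 2, by omega⟩ = nn) (heq2 : n ⟨k - 1, by omega⟩ = nn) :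
    (⋃ x ∈ {x : IG k n |
        x ∈ Subgroup.closure {gen k n ⟨k - 2, by omega⟩, gen k n ⟨k - 1, by omega⟩} ∧
        orderOf x = nn},
      ((Subgroup.closure (gen k n '' {j : Fin k | (j : ℕ) < k - 2}) ⊔
          Subgroup.zpowers x : Subgroup (IG k n)) : Set (IG k n))) = Set.univ := by
  haveI : ∀ i : Fin k, NeZero (n i) := fun i => ⟨by have := h1 i; omega⟩
  rw [Set.eq_univ_iff_forall]
  intro g
  simp only [Set.mem_iUnion, Set.mem_setOf_eq, SetLike.mem_coe]
  have hnn : 1 < nn := lt_of_lt_of_eq (h1 ⟨k - 2, by omega⟩) heq1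
  have hne : (⟨k - 2, by omega⟩ : Fin k) ≠ ⟨k - 1, by omega⟩ := by
    simp only [ne_eq, Fin.mk.injEq]
    omega
  have hS : ∀ j : Fin k, j ∉ {j : Fin k | (j : ℕ) < k - 2} →
      j = (⟨k - 2, by omega⟩ : Fin k) ∨ j = (⟨k - 1, by omega⟩ : Fin k) := by
    intro j hj
    simp only [Set.mem_setOf_eq, not_lt] at hj
    have := j.isLt
    rcases Nat.lt_or_ge (j : ℕ) (k - 1) with h | h
    · exact Or.inl (Fin.ext (show (j : ℕ) = k - 2 by omega))
    · exact Or.inr (Fin.ext (show (j : ℕ) = k - 1 by omega))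
  obtain ⟨x, hx, hmem⟩ := main_aux k n nn ⟨k - 2, by omega⟩ ⟨k - 1, by omega⟩
      hne heq1 heq2 (by omega) {j : Fin k | (j : ℕ) < k - 2} hS g
  exact ⟨x, hx, hmem⟩
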